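/- Let 𝒯 ⊆ [0,1]^{n×n} be the set of SST tournament matrices (θ_{ij} ≤ θ_{ik} whenever i ≠ k, i ≠ j, k < j; θ_{ji} = 1 - θ_{ij} for i ≠ j; θ_{ii} = 0; θ_{ij} ≤ 1/2 for i < j) and let ℳ ⊆ [0,1]^{n×n} be the set of matrices nondecreasing in both row and column index. Define f : 𝒯 → [0,1]^{n×n} by first replacing the diagonal entry (i,i) with min{θ_{i,i-1}, θ_{i+1,i}} (with the obvious boundary conventions) and then reversing the column order: f(θ)_{i,j} = D(θ)_{i, n-j+1}. Then f is injective, f(𝒯) ⊆ ℳ, and for all θ, θ' ∈ 𝒯, ‖θ - θ'‖_F ≤ ‖f(θ) - f(θ')‖_F. -/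
import Mathlib


open Finset

/-- SST tournament constraints (identity ordering; matrix space `𝒯`),
with 1-based indices in `[1, n]`, including `θ_{ij} ≤ 1/2` for `i < j`. -/
def SSTT (n : ℕ) (θ : ℕ → ℕ → ℝ) : Prop :=
  (∀ i ∈ Icc 1 n, ∀ j ∈ Icc 1 n, θ i j ∈ Set.Icc (0 : ℝ) 1) ∧
  (∀ i ∈ Icc 1 n, ∀ j ∈ Icc 1 n, ∀ k ∈ Icc 1 n,
      i ≠ j → i ≠ k → k < j → θ i j ≤ θ i k) ∧
  (∀ i ∈ Icc 1 n, ∀ j ∈ Icc 1 n, i ≠ j → θ j i = 1 - θ i j) ∧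
  (∀ i ∈ Icc 1 n, θ i i = 0) ∧
  (∀ i ∈ Icc 1 n, ∀ j ∈ Icc 1 n, i < j → θ i j ≤ 1 / 2)

/-- The diagonal-filling map `D`, with the boundary conventions
`D(θ)_{11} = θ_{21}` and `D(θ)_{nn} = θ_{n,n-1}`. -/
def Dmap (n : ℕ) (θ : ℕ → ℕ → ℝ) : ℕ → ℕ → ℝ := fun i j =>
  if i = j then
    (if i = 1 then θ 2 1 else if i = n then θ n (n - 1)
      else min (θ i (i - 1)) (θ (i + 1) i))
  else θ i j

/-- The map `f = φ ∘ D`: fill the diagonal, then reverse the column order. -/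
def fmap (n : ℕ) (θ : ℕ → ℕ → ℝ) : ℕ → ℕ → ℝ := fun i j => Dmap n θ i (n - j + 1)

section Helpers

variable {n : ℕ} {θ : ℕ → ℕ → ℝ}

private lemma mb {a : ℕ} (h1 : 1 ≤ a) (h2 : a ≤ n) : a ∈ Icc 1 n :=
  Finset.mem_Icc.mpr ⟨h1, h2⟩

private lemma sst_mono' (h : SSTT n θ) {i j k : ℕ} (hi : i ∈ Icc 1 n) (hj : j ∈ Icc 1 n)
    (hk : k ∈ Icc 1 n) (hij : i ≠ j) (hik : i ≠ k) (hkj : k ≤ j) : θ i j ≤ θ i k := by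
  rcases eq_or_lt_of_le hkj with rfl | hlt
  · exact le_refl _
  · exact h.2.1 i hi j hj k hk hij hik hlt

private lemma sst_half (h : SSTT n θ) {i j : ℕ} (hi : i ∈ Icc 1 n) (hj : j ∈ Icc 1 n)
    (hij : i < j) : 1 / 2 ≤ θ j i := by
  rw [h.2.2.1 i hi j hj hij.ne]
  linarith [h.2.2.2.2 i hi j hj hij]

private lemma D_mem (h : SSTT n θ) (hn : 2 ≤ n) {i j : ℕ} (hi : i ∈ Icc 1 n) (hj : j ∈ Icc 1 n) :
    Dmap n θ i j ∈ Set.Icc (0 : ℝ) 1 := by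
  have hi' := Finset.mem_Icc.mp hi
  have hj' := Finset.mem_Icc.mp hj
  unfold Dmap
  split_ifs with h1 h2 h3
  · exact h.1 2 (mb (by omega) (by omega)) 1 (mb le_rfl (by omega))
  · exact h.1 n (mb (by omega) le_rfl) (n - 1) (mb (by omega) (by omega))
  · have a := h.1 i hi (i - 1) (mb (by omega) (by omega))
    have b := h.1 (i + 1) (mb (by omega) (by omega)) i hi
    exact ⟨le_min a.1 b.1, (min_le_left _ _).trans a.2⟩
  · exact h.1 i hi j hj

/-- `Dmap` is nonincreasing along each row. -/
private lemma D_col (h : SSTT n θ) {i c c' : ℕ} (hi : i ∈ Icc 1 n) (hc : c ∈ Icc 1 n)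
    (hc' : c' ∈ Icc 1 n) (hcc : c' ≤ c) : Dmap n θ i c ≤ Dmap n θ i c' := by
  rcases eq_or_lt_of_le hcc with rfl | hlt
  · exact le_refl _
  have hi' := Finset.mem_Icc.mp hi
  have hcn := Finset.mem_Icc.mp hc
  have hcn' := Finset.mem_Icc.mp hc'
  by_cases h1 : i = c
  · -- `c' < i = c`:  show `D i i ≤ θ i c'`
    subst h1
    have hDne : Dmap n θ i c' = θ i c' := by
      unfold Dmap; rw [if_neg (by omega)]
    rw [hDne]
    have hkey : Dmap n θ i i ≤ θ i (i - 1) := by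
      unfold Dmap; rw [if_pos rfl]
      split_ifs with e1 e2
      · exfalso; omega
      · simp [e2]
      · exact min_le_left _ _
    exact hkey.trans (sst_mono' h hi (mb (by omega) (by omega)) hc'
      (by omega) (by omega) (by omega))
  by_cases h2 : i = c'
  · -- `i = c' < c`:  show `θ i c ≤ D i i`
    subst h2
    have hDne : Dmap n θ i c = θ i c := by
      unfold Dmap; rw [if_neg (by omega)]
    rw [hDne]
    unfold Dmap; rw [if_pos rfl]
    have hmem_c : c ∈ Icc 1 n := hc
    split_ifs with e1 e2
    · -- i = 1
      subst e1
      have half : (1:ℝ)/2 ≤ θ 2 1 := sst_half h (mb le_rfl (by omega)) (mb (by omega) (by omega)) (by omega)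
      have hle : θ 1 c ≤ θ 1 2 :=
        sst_mono' h hi hc (mb (by omega) (by omega)) (by omega) (by omega) (by omega)
      have hh : θ 1 2 ≤ 1/2 := h.2.2.2.2 1 hi 2 (mb (by omega) (by omega)) (by omega)
      linarith
    · exfalso; omega
    · apply le_min
      · exact sst_mono' h hi hc (mb (by omega) (by omega)) (by omega) (by omega) (by omega)
      · have half : (1:ℝ)/2 ≤ θ (i+1) i := sst_half h hi (mb (by omega) (by omega)) (by omega)
        have hle : θ i c ≤ θ i (i+1) :=
          sst_mono' h hi hc (mb (by omega) (by omega)) (by omega) (by omega) (by omega)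
        have hh : θ i (i+1) ≤ 1/2 := h.2.2.2.2 i hi (i+1) (mb (by omega) (by omega)) (by omega)
        linarith
  · unfold Dmap
    rw [if_neg h1, if_neg h2]
    exact sst_mono' h hi hc hc' h1 h2 hcc

/-- `Dmap` is nondecreasing along each column. -/
private lemma D_row (h : SSTT n θ) {c i i' : ℕ} (hc : c ∈ Icc 1 n) (hi : i ∈ Icc 1 n)
    (hi' : i' ∈ Icc 1 n) (hii : i ≤ i') : Dmap n θ i c ≤ Dmap n θ i' c := by
  rcases eq_or_lt_of_le hii with rfl | hlt
  · exact le_refl _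
  have hin := Finset.mem_Icc.mp hi
  have hin' := Finset.mem_Icc.mp hi'
  have hcn := Finset.mem_Icc.mp hc
  by_cases h1 : i = c
  · -- `i = c < i'`: show `D c c ≤ θ i' c`
    subst h1
    have hDne : Dmap n θ i' i = θ i' i := by
      unfold Dmap; rw [if_neg (by omega)]
    rw [hDne]
    unfold Dmap; rw [if_pos rfl]
    split_ifs with e1 e2
    · -- i = 1
      subst e1
      rw [h.2.2.1 1 hi 2 (mb (by omega) (by omega)) (by omega),
        h.2.2.1 1 hi i' hi' (by omega)]
      have : θ 1 i' ≤ θ 1 2 :=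
        sst_mono' h hi hi' (mb (by omega) (by omega)) (by omega) (by omega) (by omega)
      linarith
    · exfalso; omega
    · refine (min_le_right _ _).trans ?_
      rw [h.2.2.1 i hi (i+1) (mb (by omega) (by omega)) (by omega),
        h.2.2.1 i hi i' hi' (by omega)]
      have : θ i i' ≤ θ i (i+1) :=
        sst_mono' h hi hi' (mb (by omega) (by omega)) (by omega) (by omega) (by omega)
      linarith
  by_cases h2 : i' = c
  · -- `i < i' = c`: show `θ i c ≤ D c c`
    subst h2
    have hDne : Dmap n θ i i' = θ i i' := by
      unfold Dmap; rw [if_neg (by omega)]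
    rw [hDne]
    have hup : θ i i' ≤ 1/2 := h.2.2.2.2 i hi i' hi' hlt
    unfold Dmap; rw [if_pos rfl]
    split_ifs with e1 e2
    · exfalso; omega
    · have : (1:ℝ)/2 ≤ θ n (n-1) := by
        have := sst_half h (mb (by omega) (by omega)) (mb (by omega) (by omega))
          (show n - 1 < n by omega)
        exact this
      linarith [this, hup, show θ i i' ≤ 1/2 from hup] 
    · have ha : (1:ℝ)/2 ≤ θ i' (i'-1) := by
        have := sst_half h (mb (by omega) (by omega)) (mb (by omega) (by omega))
          (show i' - 1 < i' by omega)
        exact this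
      have hb : (1:ℝ)/2 ≤ θ (i'+1) i' := sst_half h hi' (mb (by omega) (by omega)) (by omega)
      exact hup.trans (le_min ha hb)
  · unfold Dmap
    rw [if_neg h1, if_neg h2]
    rw [h.2.2.1 c hc i hi (by omega), h.2.2.1 c hc i' hi' (by omega)]
    have : θ c i' ≤ θ c i := sst_mono' h hc hi' hi (by omega) (by omega) hii
    linarith

private lemma rev_mem {n j : ℕ} (hj : j ∈ Icc 1 n) : n - j + 1 ∈ Icc 1 n := by
  have := Finset.mem_Icc.mp hj
  exact Finset.mem_Icc.mpr ⟨by omega, by omega⟩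

end Helpers

theorem stmt_14 (n : ℕ) (hn : 2 ≤ n)
    (θ θ' : ℕ → ℕ → ℝ) (hθ : SSTT n θ) (hθ' : SSTT n θ') :
    -- `f(𝒯) ⊆ ℳ`: the image has entries in `[0,1]`...
    (∀ i ∈ Icc 1 n, ∀ j ∈ Icc 1 n, fmap n θ i j ∈ Set.Icc (0 : ℝ) 1) ∧
    -- ... and is monotone in both coordinates
    (∀ i ∈ Icc 1 n, ∀ i' ∈ Icc 1 n, ∀ j ∈ Icc 1 n, ∀ j' ∈ Icc 1 n,
        i ≤ i' → j ≤ j' → fmap n θ i j ≤ fmap n θ i' j') ∧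
    -- injectivity of `f` on `𝒯`
    ((∀ i ∈ Icc 1 n, ∀ j ∈ Icc 1 n, fmap n θ i j = fmap n θ' i j) →
      ∀ i ∈ Icc 1 n, ∀ j ∈ Icc 1 n, θ i j = θ' i j) ∧
    -- `f` expands the Frobenius distance
    Real.sqrt (∑ i ∈ Icc 1 n, ∑ j ∈ Icc 1 n, (θ i j - θ' i j) ^ 2)
      ≤ Real.sqrt (∑ i ∈ Icc 1 n, ∑ j ∈ Icc 1 n, (fmap n θ i j - fmap n θ' i j) ^ 2) := by
  refine ⟨?_, ?_, ?_, ?_⟩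
  · -- entries in [0,1]
    intro i hi j hj
    exact D_mem hθ hn hi (rev_mem hj)
  · -- monotone in both coordinates
    intro i hi i' hi' j hj j' hj' hii hjj
    have hjn := Finset.mem_Icc.mp hj
    have hjn' := Finset.mem_Icc.mp hj'
    calc Dmap n θ i (n - j + 1) ≤ Dmap n θ i (n - j' + 1) :=
          D_col hθ hi (rev_mem hj) (rev_mem hj') (by omega)
      _ ≤ Dmap n θ i' (n - j' + 1) := D_row hθ (rev_mem hj') hi hi' hii
  · -- injectivity
    intro hEq i hi j hj
    by_cases hij : i = j
    · subst hij
      rw [hθ.2.2.2.1 i hi, hθ'.2.2.2.1 i hi]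
    · have hjn := Finset.mem_Icc.mp hj
      have hd : n - (n - j + 1) + 1 = j := by omega
      have := hEq i hi (n - j + 1) (rev_mem hj)
      simp only [fmap] at this
      rw [hd] at this
      unfold Dmap at this
      rw [if_neg hij, if_neg hij] at this
      exact this
  · -- Frobenius expansion
    apply Real.sqrt_le_sqrt
    have hD : ∀ i ∈ Icc 1 n, ∑ j ∈ Icc 1 n, (fmap n θ i j - fmap n θ' i j) ^ 2
        = ∑ j ∈ Icc 1 n, (Dmap n θ i j - Dmap n θ' i j) ^ 2 := by
      intro i _
      refine Finset.sum_nbij' (fun j => n - j + 1) (fun j => n - j + 1)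
        (fun a ha => rev_mem ha) (fun a ha => rev_mem ha) ?_ ?_ ?_
      · intro a ha; have := Finset.mem_Icc.mp ha; show n - (n - a + 1) + 1 = a; omega
      · intro a ha; have := Finset.mem_Icc.mp ha; show n - (n - a + 1) + 1 = a; omega
      · intro a _; rfl
    calc ∑ i ∈ Icc 1 n, ∑ j ∈ Icc 1 n, (θ i j - θ' i j) ^ 2
        ≤ ∑ i ∈ Icc 1 n, ∑ j ∈ Icc 1 n, (Dmap n θ i j - Dmap n θ' i j) ^ 2 := by
          refine Finset.sum_le_sum fun i hi => Finset.sum_le_sum fun j hj => ?_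
          by_cases hij : i = j
          · subst hij
            rw [hθ.2.2.2.1 i hi, hθ'.2.2.2.1 i hi]
            simpa using sq_nonneg (Dmap n θ i i - Dmap n θ' i i)
          · unfold Dmap
            rw [if_neg hij, if_neg hij]
      _ = ∑ i ∈ Icc 1 n, ∑ j ∈ Icc 1 n, (fmap n θ i j - fmap n θ' i j) ^ 2 :=
          (Finset.sum_congr rfl hD).symm
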